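/- (MultGainConn) In the dynamic epistemic logic axiomatization of the muddy children puzzle, for all natural numbers c ≥ 1 and all j ≥ 1: ⊢ E_G^{c+1} λ_j → [*] E_G^{c} λ_{j+1}, where E_G^n denotes n-fold iterated shared knowledge. -/

import Mathlib

/-- Formulas of dynamic epistemic logic with common knowledge. -/
inductive Form (Atom Agent Event : Type) : Type
  | atom : Atom → Form Atom Agent Event
  | tru  : Form Atom Agent Event
  | imp  : Form Atom Agent Event → Form Atom Agent Event → Form Atom Agent Event
  | and  : Form Atom Agent Event → Form Atom Agent Event → Form Atom Agent Event
  | or   : Form Atom Agent Event → Form Atom Agent Event → Form Atom Agent Event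
  | not  : Form Atom Agent Event → Form Atom Agent Event
  | K    : Agent → Form Atom Agent Event → Form Atom Agent Event
  | C    : List Agent → Form Atom Agent Event → Form Atom Agent Event
  | E    : List Agent → Form Atom Agent Event → Form Atom Agent Event
  | box  : Event → Form Atom Agent Event → Form Atom Agent Event

namespace Form

variable {Atom Agent Event : Type}

def iff (p q : Form Atom Agent Event) : Form Atom Agent Event :=
  Form.and (Form.imp p q) (Form.imp q p)

/-- The conjunction ⋀_{i ∈ G} K_i p. -/
def conjK (G : List Agent) (p : Form Atom Agent Event) : Form Atom Agent Event :=
  match G with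
  | [] => Form.tru
  | i :: G' => Form.and (Form.K i p) (conjK G' p)

/-- Classical boolean evaluation, treating atoms and modal subformulas as opaque
(evaluated by the valuation `v`).  A formula is a classical tautology iff it
evaluates to `true` under every such valuation. -/
def evalC (v : Form Atom Agent Event → Bool) : Form Atom Agent Event → Bool
  | Form.tru => true
  | Form.imp p q => !(evalC v p) || evalC v q
  | Form.and p q => evalC v p && evalC v q
  | Form.or p q => evalC v p || evalC v q
  | Form.not p => !(evalC v p)
  | p => v p

/-- Hilbert-style derivability for the system 𝒯^{C[α]}_G, with an extra set `Ax`
of proper axioms. -/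
inductive Prf (Ax : Form Atom Agent Event → Prop) : Form Atom Agent Event → Prop
  | ax {p} : Ax p → Prf Ax p
  | taut {p} : (∀ v, evalC v p = true) → Prf Ax p
  | mp {p q} : Prf Ax p → Prf Ax (Form.imp p q) → Prf Ax q
  | kK (i : Agent) (p q : Form Atom Agent Event) :
      Prf Ax (Form.imp (Form.K i p) (Form.imp (Form.K i (Form.imp p q)) (Form.K i q)))
  | tK (i : Agent) (p : Form Atom Agent Event) : Prf Ax (Form.imp (Form.K i p) p)
  | genK (i : Agent) {p} : Prf Ax p → Prf Ax (Form.K i p)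
  | kBox (a : Event) (p q : Form Atom Agent Event) :
      Prf Ax (Form.imp (Form.box a p) (Form.imp (Form.box a (Form.imp p q)) (Form.box a q)))
  | tBox (a : Event) (p : Form Atom Agent Event) : Prf Ax (Form.imp (Form.box a p) p)
  | genBox (a : Event) {p} : Prf Ax p → Prf Ax (Form.box a p)
  | defE (G : List Agent) (p : Form Atom Agent Event) :
      Prf Ax (Form.iff (Form.E G p) (Form.conjK G p))
  | fixC (G : List Agent) (p : Form Atom Agent Event) :
      Prf Ax (Form.imp (Form.C G p) (Form.and p (Form.E G (Form.C G p))))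
  | gfpC {G : List Agent} {p r : Form Atom Agent Event} :
      Prf Ax (Form.imp r (Form.and p (Form.E G r))) → Prf Ax (Form.imp r (Form.C G p))
  | kt1 (i : Agent) (a : Event) (p : Form Atom Agent Event) :
      Prf Ax (Form.imp (Form.K i (Form.box a p)) (Form.box a (Form.K i p)))

/-- n-fold iterated shared knowledge E_G^n. -/
def iterE (G : List Agent) : ℕ → Form Atom Agent Event → Form Atom Agent Event
  | 0, p => p
  | n+1, p => Form.E G (iterE G n p)

/-- k-fold iterated dynamic modality [α]^k. -/
def iterBox (a : Event) : ℕ → Form Atom Agent Event → Form Atom Agent Event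
  | 0, p => p
  | n+1, p => Form.box a (iterBox a n p)

end Form

/-- The empty set of proper axioms. -/
def NoAx {Atom Agent Event : Type} : Form Atom Agent Event → Prop := fun _ => False

/-- Atomic propositions of the muddy children puzzle. -/
inductive MCAtom : Type
  | lam : ℕ → MCAtom   -- at least j children are muddy
  | eps : ℕ → MCAtom   -- exactly j children are muddy
  | mu  : ℕ → MCAtom   -- child i is muddy

abbrev MForm (Event : Type) := Form MCAtom ℕ Event

def lam {Event : Type} (j : ℕ) : MForm Event := Form.atom (MCAtom.lam j)
def eps {Event : Type} (j : ℕ) : MForm Event := Form.atom (MCAtom.eps j)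
def mud {Event : Type} (i : ℕ) : MForm Event := Form.atom (MCAtom.mu i)

section Aux
namespace Form

variable {Atom Agent Event : Type} {Ax : Form Atom Agent Event → Prop}

theorem imp_trans {p q r : Form Atom Agent Event}
    (h1 : Prf Ax (imp p q)) (h2 : Prf Ax (imp q r)) : Prf Ax (imp p r) := by
  refine Prf.mp h2 (Prf.mp h1 ?_)
  apply Form.Prf.taut
  intro v
  cases h1 : Form.evalC v (p) <;> cases h2 : Form.evalC v (q) <;> cases h3 : Form.evalC v (r) <;> simp_all [Form.iff, Form.evalC]

theorem and_left {p q : Form Atom Agent Event} (h : Prf Ax (and p q)) : Prf Ax p := by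
  refine Prf.mp h ?_
  apply Form.Prf.taut
  intro v
  cases h1 : Form.evalC v (p) <;> cases h2 : Form.evalC v (q) <;> simp_all [Form.iff, Form.evalC]

theorem and_right {p q : Form Atom Agent Event} (h : Prf Ax (and p q)) : Prf Ax q := by
  refine Prf.mp h ?_
  apply Form.Prf.taut
  intro v
  cases h1 : Form.evalC v (p) <;> cases h2 : Form.evalC v (q) <;> simp_all [Form.iff, Form.evalC]

theorem swap_mp {a b c : Form Atom Agent Event}
    (h : Prf Ax (imp a (imp b c))) (hb : Prf Ax b) : Prf Ax (imp a c) := by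
  refine Prf.mp hb (Prf.mp h ?_)
  apply Form.Prf.taut
  intro v
  cases h1 : Form.evalC v (a) <;> cases h2 : Form.evalC v (b) <;> cases h3 : Form.evalC v (c) <;> simp_all [Form.iff, Form.evalC]

theorem and_mono {a b c d : Form Atom Agent Event}
    (h1 : Prf Ax (imp a c)) (h2 : Prf Ax (imp b d)) :
    Prf Ax (imp (and a b) (and c d)) := by
  refine Prf.mp h2 (Prf.mp h1 ?_)
  apply Form.Prf.taut
  intro v
  cases h1 : Form.evalC v (a) <;> cases h2 : Form.evalC v (b) <;> cases h3 : Form.evalC v (c) <;> cases h4 : Form.evalC v (d) <;> simp_all [Form.iff, Form.evalC]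

theorem pair_imp {x a b : Form Atom Agent Event}
    (h1 : Prf Ax (imp x a)) (h2 : Prf Ax (imp x b)) :
    Prf Ax (imp x (and a b)) := by
  refine Prf.mp h2 (Prf.mp h1 ?_)
  apply Form.Prf.taut
  intro v
  cases h1 : Form.evalC v (x) <;> cases h2 : Form.evalC v (a) <;> cases h3 : Form.evalC v (b) <;> simp_all [Form.iff, Form.evalC]

theorem K_mono (i : Agent) {p q : Form Atom Agent Event}
    (h : Prf Ax (imp p q)) : Prf Ax (imp (K i p) (K i q)) :=
  swap_mp (Prf.kK i p q) (Prf.genK i h)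

theorem box_mono (a : Event) {p q : Form Atom Agent Event}
    (h : Prf Ax (imp p q)) : Prf Ax (imp (box a p) (box a q)) :=
  swap_mp (Prf.kBox a p q) (Prf.genBox a h)

theorem const_imp {p q : Form Atom Agent Event} (h : Prf Ax q) : Prf Ax (imp p q) := by
  refine Prf.mp h ?_
  apply Form.Prf.taut
  intro v
  cases h1 : Form.evalC v (p) <;> cases h2 : Form.evalC v (q) <;> simp_all [Form.iff, Form.evalC]

/-- From ⊢ p → (q → r), get ⊢ [a]p ∧ [a]q → [a]r. -/
theorem box_mp2 (a : Event) {p q r : Form Atom Agent Event}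
    (h : Prf Ax (imp p (imp q r))) :
    Prf Ax (imp (and (box a p) (box a q)) (box a r)) := by
  have f : Prf Ax (imp (box a p) (box a (imp q r))) :=
    swap_mp (Prf.kBox a p (imp q r)) (Prf.genBox a h)
  have g := Prf.kBox (Ax := Ax) a q r
  refine Prf.mp g (Prf.mp f ?_)
  apply Form.Prf.taut
  intro v
  cases h1 : Form.evalC v (box a p) <;> cases h2 : Form.evalC v (box a q) <;> cases h3 : Form.evalC v (box a (imp q r)) <;> cases h4 : Form.evalC v (box a r) <;> simp_all [Form.iff, Form.evalC]

theorem K_mp2 (i : Agent) {p q r : Form Atom Agent Event}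
    (h : Prf Ax (imp p (imp q r))) :
    Prf Ax (imp (and (K i p) (K i q)) (K i r)) := by
  have f : Prf Ax (imp (K i p) (K i (imp q r))) :=
    swap_mp (Prf.kK i p (imp q r)) (Prf.genK i h)
  have g := Prf.kK (Ax := Ax) i q r
  refine Prf.mp g (Prf.mp f ?_)
  apply Form.Prf.taut
  intro v
  cases h1 : Form.evalC v (K i p) <;> cases h2 : Form.evalC v (K i q) <;> cases h3 : Form.evalC v (K i (imp q r)) <;> cases h4 : Form.evalC v (K i r) <;> simp_all [Form.iff, Form.evalC]

theorem conjK_mono (G : List Agent) {p q : Form Atom Agent Event}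
    (h : Prf Ax (imp p q)) : Prf Ax (imp (conjK G p) (conjK G q)) := by
  induction G with
  | nil => (apply Form.Prf.taut; intro v; simp [Form.iff, Form.evalC, Form.conjK])
  | cons i G' ih => exact and_mono (K_mono i h) ih

theorem E_mono (G : List Agent) {p q : Form Atom Agent Event}
    (h : Prf Ax (imp p q)) : Prf Ax (imp (E G p) (E G q)) := by
  have d1 := and_left (Prf.defE (Ax := Ax) G p)
  have d2 := and_right (Prf.defE (Ax := Ax) G q)
  exact imp_trans d1 (imp_trans (conjK_mono G h) d2)

theorem E_elim {G : List Agent} (hG : G ≠ []) (p : Form Atom Agent Event) :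
    Prf Ax (imp (E G p) p) := by
  have d1 := and_left (Prf.defE (Ax := Ax) G p)
  match G, hG with
  | i :: G', _ =>
    refine imp_trans d1 ?_
    have hk : Prf Ax (imp (and (K i p) (conjK G' p)) (K i p)) := by
      apply Form.Prf.taut
      intro v
      cases h1 : Form.evalC v (K i p) <;> cases h2 : Form.evalC v (conjK G' p) <;> simp_all [Form.iff, Form.evalC]
    exact imp_trans hk (Prf.tK i p)

theorem conjK_box (G : List Agent) (a : Event) (p : Form Atom Agent Event) :
    Prf Ax (imp (conjK G (box a p)) (box a (conjK G p))) := by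
  induction G with
  | nil =>
    refine const_imp (Prf.genBox a ?_)
    apply Form.Prf.taut; intro v; simp [Form.iff, Form.evalC, Form.conjK]
  | cons i G' ih =>
    have h1 : Prf Ax (imp (and (K i (box a p)) (conjK G' (box a p)))
        (and (box a (K i p)) (box a (conjK G' p)))) :=
      and_mono (Prf.kt1 i a p) ih
    refine imp_trans h1 (box_mp2 a ?_)
    apply Form.Prf.taut
    intro v
    cases h1 : Form.evalC v (K i p) <;> cases h2 : Form.evalC v (conjK G' p) <;> simp_all [Form.iff, Form.evalC, Form.conjK]

theorem E_box (G : List Agent) (a : Event) (p : Form Atom Agent Event) :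
    Prf Ax (imp (E G (box a p)) (box a (E G p))) := by
  have d1 := and_left (Prf.defE (Ax := Ax) G (box a p))
  have d2 := and_right (Prf.defE (Ax := Ax) G p)
  exact imp_trans d1 (imp_trans (conjK_box G a p) (box_mono a d2))

theorem conjK_and (G : List Agent) (p q : Form Atom Agent Event) :
    Prf Ax (imp (and (conjK G p) (conjK G q)) (conjK G (and p q))) := by
  induction G with
  | nil => (apply Form.Prf.taut; intro v; simp [Form.iff, Form.evalC, Form.conjK])
  | cons i G' ih =>
    have hre : Prf Ax (imp (and (and (K i p) (conjK G' p)) (and (K i q) (conjK G' q)))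
        (and (and (K i p) (K i q)) (and (conjK G' p) (conjK G' q)))) := by
      apply Form.Prf.taut
      intro v
      cases h1 : Form.evalC v (K i p) <;> cases h2 : Form.evalC v (conjK G' p) <;> cases h3 : Form.evalC v (K i q) <;> cases h4 : Form.evalC v (conjK G' q) <;> simp_all [Form.iff, Form.evalC]
    have hk : Prf Ax (imp (and (K i p) (K i q)) (K i (and p q))) := by
      refine K_mp2 i ?_
      apply Form.Prf.taut
      intro v
      cases h1 : Form.evalC v (p) <;> cases h2 : Form.evalC v (q) <;> simp_all [Form.iff, Form.evalC]
    exact imp_trans hre (and_mono hk ih)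

theorem E_and (G : List Agent) (p q : Form Atom Agent Event) :
    Prf Ax (imp (and (E G p) (E G q)) (E G (and p q))) := by
  have d1 := and_left (Prf.defE (Ax := Ax) G p)
  have d2 := and_left (Prf.defE (Ax := Ax) G q)
  have d3 := and_right (Prf.defE (Ax := Ax) G (and p q))
  exact imp_trans (and_mono d1 d2) (imp_trans (conjK_and G p q) d3)

theorem boxE_and (G : List Agent) (a : Event) (p q : Form Atom Agent Event) :
    Prf Ax (imp (and (box a (E G p)) (box a (E G q))) (box a (E G (and p q))))  := by
  refine box_mp2 a ?_
  have h := E_and (Ax := Ax) G p q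
  refine Prf.mp h ?_
  apply Form.Prf.taut
  intro v
  cases h1 : Form.evalC v (E G p) <;> cases h2 : Form.evalC v (E G q) <;> cases h3 : Form.evalC v (E G (and p q)) <;> simp_all [Form.iff, Form.evalC]

end Form
end Aux

/-- (MultGainConn) ⊢ E_G^{c+1} λ_j → [*] E_G^c λ_{j+1} for c ≥ 1 and j ≥ 1. -/
theorem multGainConn {Event : Type} (Ax : MForm Event → Prop)
    (G : List ℕ) (hG : G ≠ []) (st : Event)
    (hMC2 : ∀ j : ℕ, 1 ≤ j →
      Form.Prf Ax (Form.imp (Form.E G (Form.E G (lam j)))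
        (Form.box st (Form.E G (Form.not (eps j))))))
    (hPers : ∀ j : ℕ, Form.Prf Ax (Form.imp (lam j) (Form.box st (lam j))))
    (hEQ : ∀ j : ℕ, Form.Prf Ax (Form.iff (eps j) (Form.and (lam j) (Form.not (lam (j+1)))))) :
    ∀ c : ℕ, 1 ≤ c → ∀ j : ℕ, 1 ≤ j →
      Form.Prf Ax (Form.imp (Form.iterE G (c+1) (lam j))
        (Form.box st (Form.iterE G c (lam (j+1))))) := by
  intro c hc
  induction c, hc using Nat.le_induction with
  | base =>
    intro j hj
    simp only [Form.iterE]
    -- E_G (E_G λ_j) → [*] E_G λ_{j+1}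
    have hA := hMC2 j hj
    have hB : Form.Prf Ax (Form.imp (Form.E G (Form.E G (lam j))) (Form.box st (Form.E G (lam j)))) := by
      have h1 := Form.E_elim (Ax := Ax) hG (Form.E G (lam j))
      have h2 := Form.E_mono (Ax := Ax) G (hPers j)
      have h3 := Form.E_box (Ax := Ax) G st (lam j)
      exact Form.imp_trans h1 (Form.imp_trans h2 h3)
    have hC := Form.pair_imp hB hA
    have hD := Form.boxE_and (Ax := Ax) G st (lam j) (Form.not (eps j))
    have hstep : Form.Prf Ax (Form.imp (Form.and (lam j) (Form.not (eps j))) (lam (j+1))) := by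
      have he := Form.and_right (hEQ j)
      refine Form.Prf.mp he ?_
      apply Form.Prf.taut
      intro v
      cases h1 : Form.evalC v (lam j) <;> cases h2 : Form.evalC v (lam (j+1)) <;> cases h3 : Form.evalC v (eps j) <;> simp_all [Form.iff, Form.evalC]
    have hE := Form.box_mono (Ax := Ax) st (Form.E_mono G hstep)
    exact Form.imp_trans hC (Form.imp_trans hD hE)
  | succ c hc ih =>
    intro j hj
    simp only [Form.iterE] at *
    have IH := ih j hj
    have h1 := Form.E_mono (Ax := Ax) G IH
    have h2 := Form.E_box (Ax := Ax) G st (Form.iterE G c (lam (j+1)))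
    exact Form.imp_trans h1 h2
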